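/- Let 0 < α < 1 and let κ ∈ ℝ with κ < 0 or κ > 1. Then there exists a constant C > 0 such that |E_α(−z) − κ|^{−1} ≤ C for all z ≥ 0. -/

import Mathlib

open Real Set MeasureTheory intervalIntegral Filter Topology

/-- Two-parameter Mittag-Leffler function of a real argument; terms at poles of Γ
are interpreted as 0 (in Lean, division by Γ = 0 gives 0). -/
noncomputable def mittagLeffler (α σ x : ℝ) : ℝ :=
  ∑' k : ℕ, x ^ k / Real.Gamma (α * (k : ℝ) + σ)

/-- Auxiliary: `E_α(-t^α)` as a function of `t`. -/
noncomputable def MLu (α t : ℝ) : ℝ :=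
  ∑' k : ℕ, (-1) ^ k * t ^ (α * (k : ℝ)) / Real.Gamma (α * (k : ℝ) + 1)

section aux
variable {α : ℝ}

lemma gam_pos (hα0 : 0 < α) (k : ℕ) : 0 < Real.Gamma (α * (k : ℝ) + 1) := by
  apply Real.Gamma_pos_of_pos; positivity

lemma gam_ineq (hα0 : 0 < α) (hα1 : α < 1) {x : ℝ} (hx : 0 < x) :
    Real.Gamma (x + 1) ≤ Real.Gamma (x + α) * (x + α) ^ ((1:ℝ) - α) := by
  have hxa : 0 < x + α := by linarith
  have hxa1 : 0 < x + α + 1 := by linarith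
  have h := Real.convexOn_log_Gamma.2 (mem_Ioi.mpr hxa) (mem_Ioi.mpr hxa1)
      (le_of_lt hα0) (by linarith : (0:ℝ) ≤ 1 - α) (by ring)
  simp only [smul_eq_mul, Function.comp_apply] at h
  have hcomb : α * (x + α) + (1 - α) * (x + α + 1) = x + 1 := by ring
  rw [hcomb] at h
  have hG1 : Real.Gamma (x + α + 1) = (x + α) * Real.Gamma (x + α) :=
    Real.Gamma_add_one (ne_of_gt hxa)
  have hGpos : 0 < Real.Gamma (x + α) := Real.Gamma_pos_of_pos hxa
  rw [hG1, Real.log_mul (ne_of_gt hxa) (ne_of_gt hGpos)] at h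
  have h2 : Real.log (Real.Gamma (x + 1)) ≤
      Real.log (Real.Gamma (x + α)) + (1 - α) * Real.log (x + α) := by nlinarith
  have h3 := Real.exp_le_exp.mpr h2
  rw [Real.exp_log (Real.Gamma_pos_of_pos (by linarith : (0:ℝ) < x + 1)),
    Real.exp_add, Real.exp_log hGpos] at h3
  rwa [Real.rpow_def_of_pos hxa, mul_comm (Real.log (x + α))]

lemma summ (hα0 : 0 < α) (hα1 : α < 1) {M : ℝ} (hM : 0 ≤ M) :
    Summable (fun k : ℕ => M ^ k / Real.Gamma (α * (k : ℝ) + 1)) := by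
  apply summable_of_ratio_norm_eventually_le (r := 1/2) (by norm_num)
  have htend : Tendsto (fun k : ℕ => (α * (k:ℝ) + 1) ^ α) atTop atTop := by
    apply (tendsto_rpow_atTop hα0).comp
    apply tendsto_atTop_add_const_right
    exact Tendsto.const_mul_atTop hα0 tendsto_natCast_atTop_atTop
  filter_upwards [htend.eventually_ge_atTop (4 * M + 1)] with k h4
  set x : ℝ := α * (k : ℝ) + 1 with hxdef
  have hx : 0 < x := by positivity
  have hx1 : 1 ≤ x := by
    have : 0 ≤ α * (k:ℝ) := by positivity
    simp [hxdef]; linarith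
  have hGx : 0 < Real.Gamma x := Real.Gamma_pos_of_pos hx
  have hGxa : 0 < Real.Gamma (x + α) := Real.Gamma_pos_of_pos (by linarith)
  set P : ℝ := (x + α) ^ ((1:ℝ) - α) with hPdef
  have hP : 0 < P := Real.rpow_pos_of_pos (by linarith) _
  have h1 : x * Real.Gamma x ≤ Real.Gamma (x + α) * P := by
    have := gam_ineq hα0 hα1 hx
    rwa [Real.Gamma_add_one (ne_of_gt hx)] at this
  have h2 : P ≤ 2 * x ^ ((1:ℝ) - α) := by
    calc P ≤ (2 * x) ^ ((1:ℝ) - α) := by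
              apply Real.rpow_le_rpow (by linarith) (by linarith) (by linarith)
      _ = (2:ℝ) ^ ((1:ℝ) - α) * x ^ ((1:ℝ) - α) := Real.mul_rpow (by norm_num) hx.le
      _ ≤ 2 * x ^ ((1:ℝ) - α) := by
          have h21 : (2:ℝ) ^ ((1:ℝ) - α) ≤ (2:ℝ) ^ (1:ℝ) :=
            Real.rpow_le_rpow_of_exponent_le (by norm_num) (by linarith)
          rw [Real.rpow_one] at h21
          have := Real.rpow_nonneg hx.le ((1:ℝ) - α)
          nlinarith
  have h3 : x ^ ((1:ℝ) - α) * x ^ α = x := by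
    rw [← Real.rpow_add hx]; norm_num
  have hx4 : 4 * M * x ^ ((1:ℝ) - α) ≤ x := by
    have hxna : 0 ≤ x ^ ((1:ℝ) - α) := Real.rpow_nonneg hx.le _
    nlinarith [h4, h3]
  have hMP : M * P ≤ x / 2 := by nlinarith [Real.rpow_nonneg hx.le ((1:ℝ) - α)]
  have hcast : α * ((k + 1 : ℕ) : ℝ) + 1 = x + α := by push_cast; ring
  rw [hcast]
  have hMk : (0:ℝ) ≤ M ^ k := pow_nonneg hM k
  rw [Real.norm_eq_abs, Real.norm_eq_abs, abs_of_nonneg (by positivity),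
    abs_of_nonneg (by positivity)]
  rw [mul_div_assoc'] at *
  rw [div_le_div_iff₀ hGxa (by positivity)]
  have gP : M ^ (k+1) * Real.Gamma x * P ≤ 1 / 2 * M ^ k * Real.Gamma (x + α) * P := by
    rw [pow_succ]
    nlinarith [mul_le_mul_of_nonneg_left h1 (mul_nonneg (by norm_num : (0:ℝ) ≤ 1/2) hMk),
      mul_le_mul_of_nonneg_left hMP (mul_nonneg hMk hGx.le)]
  exact le_of_mul_le_mul_right (by linarith [gP]) hP

lemma rpow_contOn {p : ℝ} (hp : 0 ≤ p) : ContinuousOn (fun s : ℝ => s ^ p) (Ici 0) :=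
  fun x _ => (Real.continuousAt_rpow_const x p (Or.inr hp)).continuousWithinAt

lemma MLu_term_summable (hα0 : 0 < α) (hα1 : α < 1) {t : ℝ} (ht : 0 ≤ t) :
    Summable (fun k : ℕ => (-1) ^ k * t ^ (α * (k : ℝ)) / Real.Gamma (α * (k : ℝ) + 1)) := by
  apply Summable.of_norm_bounded (summ hα0 hα1 (Real.rpow_nonneg ht α))
  intro k
  have hG := gam_pos hα0 k
  have ht' : (0:ℝ) ≤ t ^ (α * (k:ℝ)) := Real.rpow_nonneg ht _
  rw [Real.norm_eq_abs, abs_div, abs_mul, abs_pow, abs_neg, abs_one, one_pow, one_mul,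
    abs_of_nonneg ht', abs_of_nonneg hG.le, ← Real.rpow_natCast (t ^ α) k,
    ← Real.rpow_mul ht]

lemma MLu_zero (hα0 : 0 < α) : MLu α 0 = 1 := by
  rw [MLu, tsum_eq_single 0]
  · norm_num
  · intro k hk
    have hk' : (0:ℝ) < α * (k : ℝ) := by
      have : (0:ℝ) < (k:ℝ) := by exact_mod_cast Nat.pos_of_ne_zero hk
      positivity
    rw [Real.zero_rpow (ne_of_gt hk')]
    simp

lemma MLu_contOn (hα0 : 0 < α) (hα1 : α < 1) {T : ℝ} (hT : 0 ≤ T) :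
    ContinuousOn (MLu α) (Icc 0 T) := by
  rw [continuousOn_iff_continuous_restrict]
  have hrw : (Icc (0:ℝ) T).restrict (MLu α) = fun x : Icc (0:ℝ) T =>
      ∑' k : ℕ, (-1) ^ k * (x:ℝ) ^ (α * (k:ℝ)) / Real.Gamma (α * (k:ℝ) + 1) := rfl
  show Continuous ((Icc (0:ℝ) T).restrict (MLu α))
  rw [hrw]
  apply continuous_tsum (u := fun k : ℕ => (T ^ α) ^ k / Real.Gamma (α * (k:ℝ) + 1))
  · intro k
    apply Continuous.div_const
    apply Continuous.mul continuous_const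
    have hcont : ContinuousOn (fun s : ℝ => s ^ (α * (k:ℝ))) (Icc 0 T) :=
      (rpow_contOn (by positivity)).mono Icc_subset_Ici_self
    exact continuousOn_iff_continuous_restrict.mp hcont
  · exact summ hα0 hα1 (Real.rpow_nonneg hT α)
  · intro k x
    have hG := gam_pos hα0 k
    have hx0 : (0:ℝ) ≤ (x:ℝ) := x.2.1
    have hxT : (x:ℝ) ≤ T := x.2.2
    have ht' : (0:ℝ) ≤ (x:ℝ) ^ (α * (k:ℝ)) := Real.rpow_nonneg hx0 _
    rw [Real.norm_eq_abs, abs_div, abs_mul, abs_pow, abs_neg, abs_one, one_pow, one_mul,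
      abs_of_nonneg ht', abs_of_nonneg hG.le, ← Real.rpow_natCast (T ^ α) k,
      ← Real.rpow_mul hT]
    exact (div_le_div_iff_of_pos_right hG).mpr (Real.rpow_le_rpow hx0 hxT (by positivity))

lemma beta1 {a b : ℝ} (ha : 0 < a) (hb : 0 < b) :
    ∫ x in (0:ℝ)..1, x ^ (b - 1) * (1 - x) ^ (a - 1) =
      Real.Gamma a * Real.Gamma b / Real.Gamma (a + b) := by
  have hc := Complex.Gamma_mul_Gamma_eq_betaIntegral
    (s := (b:ℂ)) (t := (a:ℂ)) (by simpa using hb) (by simpa using ha)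
  rw [Complex.betaIntegral] at hc
  have hint : (∫ x in (0:ℝ)..1, (x:ℂ) ^ ((b:ℂ) - 1) * ((1:ℂ) - (x:ℂ)) ^ ((a:ℂ) - 1)) =
      ((∫ x in (0:ℝ)..1, x ^ (b - 1) * (1 - x) ^ (a - 1) : ℝ) : ℂ) := by
    rw [← intervalIntegral.integral_ofReal]
    apply intervalIntegral.integral_congr
    intro x hx
    rw [uIcc_of_le (by norm_num : (0:ℝ) ≤ 1)] at hx
    push_cast
    rw [Complex.ofReal_cpow hx.1, Complex.ofReal_cpow (by linarith [hx.2] : (0:ℝ) ≤ 1 - x)]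
    push_cast
    ring
  rw [hint] at hc
  have hGab : Complex.Gamma ((b:ℂ) + (a:ℂ)) = ((Real.Gamma (b + a) : ℝ) : ℂ) := by
    rw [← Complex.ofReal_add, Complex.Gamma_ofReal]
  rw [Complex.Gamma_ofReal, Complex.Gamma_ofReal, hGab] at hc
  have hc' : Real.Gamma b * Real.Gamma a = Real.Gamma (b + a) *
      ∫ x in (0:ℝ)..1, x ^ (b - 1) * (1 - x) ^ (a - 1) := by
    exact_mod_cast hc
  have hG : Real.Gamma (a + b) ≠ 0 :=
    ne_of_gt (Real.Gamma_pos_of_pos (by linarith))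
  rw [add_comm b a] at hc'
  field_simp
  linarith [hc']

lemma betat {a b t : ℝ} (ha : 0 < a) (hb : 0 < b) (ht : 0 < t) :
    ∫ s in (0:ℝ)..t, (t - s) ^ (a - 1) * s ^ (b - 1) =
      Real.Gamma a * Real.Gamma b / Real.Gamma (a + b) * t ^ (a + b - 1) := by
  have hsub : (∫ x in (0:ℝ)..1, (fun s => (t - s) ^ (a - 1) * s ^ (b - 1)) (t * x)) =
      t⁻¹ • ∫ s in (0:ℝ)..t, (t - s) ^ (a - 1) * s ^ (b - 1) := by
    have := intervalIntegral.integral_comp_mul_left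
      (fun s => (t - s) ^ (a - 1) * s ^ (b - 1)) (ne_of_gt ht) (a := (0:ℝ)) (b := 1)
    simpa using this
  have hpt : (∫ x in (0:ℝ)..1, (fun s => (t - s) ^ (a - 1) * s ^ (b - 1)) (t * x)) =
      t ^ (a + b - 2) * ∫ x in (0:ℝ)..1, x ^ (b - 1) * (1 - x) ^ (a - 1) := by
    rw [← intervalIntegral.integral_const_mul]
    apply intervalIntegral.integral_congr
    intro x hx
    rw [uIcc_of_le (by norm_num : (0:ℝ) ≤ 1)] at hx
    simp only
    have h1 : t - t * x = t * (1 - x) := by ring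
    rw [h1, Real.mul_rpow ht.le (by linarith [hx.2] : (0:ℝ) ≤ 1 - x),
      Real.mul_rpow ht.le hx.1]
    rw [show t ^ (a-1) * (1-x)^(a-1) * (t^(b-1) * x^(b-1)) =
      (t^(a-1)*t^(b-1)) * (x^(b-1)*(1-x)^(a-1)) from by ring,
      ← Real.rpow_add ht, show a-1+(b-1) = a+b-2 from by ring]
  have key : t⁻¹ * (∫ s in (0:ℝ)..t, (t - s) ^ (a - 1) * s ^ (b - 1)) =
      t ^ (a + b - 2) * (Real.Gamma a * Real.Gamma b / Real.Gamma (a + b)) := by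
    rw [← beta1 ha hb, ← hpt, hsub]; simp [smul_eq_mul]
  have ht2 : t ^ (a + b - 1) = t * t ^ (a + b - 2) := by
    rw [show a + b - 1 = 1 + (a + b - 2) by ring, Real.rpow_add ht, Real.rpow_one]
  have hG : Real.Gamma (a + b) ≠ 0 := ne_of_gt (Real.Gamma_pos_of_pos (by linarith))
  field_simp at key
  rw [ht2, div_mul_eq_mul_div, eq_div_iff hG]
  nlinarith [key]

lemma ker_int (hα0 : 0 < α) (hα1 : α < 1) (t a b : ℝ) :
    IntervalIntegrable (fun s => (t - s) ^ (α - 1)) volume a b := by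
  have h := intervalIntegrable_rpow' (a := t - a) (b := t - b)
    (by linarith : (-1:ℝ) < α - 1)
  simpa using h.comp_sub_left t

lemma uker_int (hα0 : 0 < α) (hα1 : α < 1) {t a b : ℝ} (h0 : 0 ≤ a) (hab : a ≤ b) :
    IntervalIntegrable (fun s => (t - s) ^ (α - 1) * MLu α s) volume a b := by
  apply (ker_int hα0 hα1 t a b).mul_continuousOn
  rw [uIcc_of_le hab]
  exact (MLu_contOn hα0 hα1 (le_trans h0 hab)).mono (Icc_subset_Icc h0 le_rfl)

lemma inteq (hα0 : 0 < α) (hα1 : α < 1) {t : ℝ} (ht : 0 < t) :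
    ∫ s in (0:ℝ)..t, (t - s) ^ (α - 1) * MLu α s =
      Real.Gamma α * (1 - MLu α t) := by
  have hGk : ∀ k : ℕ, (0:ℝ) < Real.Gamma (α * (k:ℝ) + 1) := gam_pos hα0
  have hbet : ∀ k : ℕ, ∫ s in (0:ℝ)..t, (t - s) ^ (α - 1) * s ^ (α * (k:ℝ)) =
      Real.Gamma α * Real.Gamma (α * (k:ℝ) + 1) / Real.Gamma (α * ((k:ℝ) + 1) + 1)
        * t ^ (α * ((k:ℝ) + 1)) := by
    intro k
    have h := betat (a := α) (b := α * (k:ℝ) + 1) hα0 (by positivity) ht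
    rw [show α * (k:ℝ) + 1 - 1 = α * (k:ℝ) from by ring] at h
    rw [show α + (α * (k:ℝ) + 1) = α * ((k:ℝ) + 1) + 1 from by ring] at h
    rw [show α * ((k:ℝ) + 1) + 1 - 1 = α * ((k:ℝ) + 1) from by ring] at h
    exact h
  set c : ℕ → ℝ := fun k => (-1) ^ k / Real.Gamma (α * (k:ℝ) + 1) with hc
  set F : ℕ → ℝ → ℝ := fun k s => c k * ((t - s) ^ (α - 1) * s ^ (α * (k:ℝ))) with hF
  have hFi : ∀ k : ℕ, IntervalIntegrable (fun s => (t - s) ^ (α - 1) * s ^ (α * (k:ℝ)))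
      volume 0 t := by
    intro k
    apply (ker_int hα0 hα1 t 0 t).mul_continuousOn
    rw [uIcc_of_le ht.le]
    exact (rpow_contOn (by positivity)).mono Icc_subset_Ici_self
  have hFi' : ∀ k : ℕ, Integrable (F k) (volume.restrict (Ioc 0 t)) := by
    intro k
    exact (intervalIntegrable_iff_integrableOn_Ioc_of_le ht.le).mp ((hFi k).const_mul (c k))
  have hmeas : MeasurableSet (Ioc (0:ℝ) t) := measurableSet_Ioc
  have hIk : ∀ k : ℕ, ∫ s in Ioc (0:ℝ) t, F k s =
      c k * (Real.Gamma α * Real.Gamma (α * (k:ℝ) + 1) / Real.Gamma (α * ((k:ℝ) + 1) + 1)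
        * t ^ (α * ((k:ℝ) + 1))) := by
    intro k
    rw [show (∫ s in Ioc (0:ℝ) t, F k s) =
        ∫ s in Ioc (0:ℝ) t, c k * ((t - s) ^ (α - 1) * s ^ (α * (k:ℝ))) from rfl,
      MeasureTheory.integral_const_mul, ← intervalIntegral.integral_of_le ht.le, hbet k]
  have hnorm : ∀ k : ℕ, (∫ s in Ioc (0:ℝ) t, ‖F k s‖) =
      Real.Gamma α * t ^ (α * ((k:ℝ) + 1)) / Real.Gamma (α * ((k:ℝ) + 1) + 1) := by
    intro k
    have h1 : EqOn (fun s => ‖F k s‖)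
        (fun s => (1 / Real.Gamma (α * (k:ℝ) + 1)) * ((t - s) ^ (α - 1) * s ^ (α * (k:ℝ))))
        (Ioc (0:ℝ) t) := by
      intro s hs
      have h2 : (0:ℝ) ≤ (t - s) ^ (α - 1) := Real.rpow_nonneg (by linarith [hs.2]) _
      have h3 : (0:ℝ) ≤ s ^ (α * (k:ℝ)) := Real.rpow_nonneg (le_of_lt hs.1) _
      simp only [hF, hc, Real.norm_eq_abs, abs_mul, abs_div, abs_pow, abs_neg, abs_one,
        one_pow, abs_of_nonneg (hGk k).le, abs_of_nonneg h2, abs_of_nonneg h3]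
    rw [setIntegral_congr_fun hmeas h1, MeasureTheory.integral_const_mul,
      ← intervalIntegral.integral_of_le ht.le, hbet k]
    have := (hGk k).ne'
    field_simp
  have hsum : Summable (fun k : ℕ => ∫ s in Ioc (0:ℝ) t, ‖F k s‖) := by
    have hbase := summ hα0 hα1 (M := t ^ α) (Real.rpow_nonneg ht.le α)
    have hshift : Summable (fun k : ℕ => (t ^ α) ^ (k + 1)
        / Real.Gamma (α * ((k:ℝ) + 1) + 1)) := by
      have := (_root_.summable_nat_add_iff 1).mpr hbase
      apply this.congr
      intro k; push_cast; ring_nf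
    apply ((hshift.mul_left (Real.Gamma α)).congr)
    intro k
    rw [hnorm k]
    rw [← Real.rpow_natCast (t ^ α) (k + 1), ← Real.rpow_mul ht.le]
    push_cast
    ring_nf
  have hswap := MeasureTheory.integral_tsum_of_summable_integral_norm hFi' hsum
  have hae : EqOn (fun s => ∑' k : ℕ, F k s) (fun s => (t - s) ^ (α - 1) * MLu α s)
      (Ioc (0:ℝ) t) := by
    intro s _
    simp only [MLu, ← tsum_mul_left]
    apply tsum_congr
    intro k
    simp only [hF, hc]
    ring
  rw [intervalIntegral.integral_of_le ht.le, ← setIntegral_congr_fun hmeas hae, ← hswap]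
  have hg := MLu_term_summable hα0 hα1 ht.le
  have h0 : MLu α t = 1 + ∑' k : ℕ, (-1) ^ (k + 1) * t ^ (α * ((k:ℝ) + 1))
      / Real.Gamma (α * ((k:ℝ) + 1) + 1) := by
    rw [MLu, Summable.tsum_eq_zero_add hg]
    norm_num
  have hneg : ∑' k : ℕ, (-1) ^ (k + 1) * t ^ (α * ((k:ℝ) + 1))
      / Real.Gamma (α * ((k:ℝ) + 1) + 1) =
      - ∑' k : ℕ, (-1) ^ k * t ^ (α * ((k:ℝ) + 1)) / Real.Gamma (α * ((k:ℝ) + 1) + 1) := by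
    rw [← tsum_neg]
    apply tsum_congr
    intro k
    rw [pow_succ]
    ring
  have hfin : ∑' k : ℕ, (∫ s in Ioc (0:ℝ) t, F k s) =
      Real.Gamma α * ∑' k : ℕ, (-1) ^ k * t ^ (α * ((k:ℝ) + 1))
        / Real.Gamma (α * ((k:ℝ) + 1) + 1) := by
    rw [← tsum_mul_left]
    apply tsum_congr
    intro k
    rw [hIk k, hc]
    have h1 := (hGk k).ne'
    field_simp
  rw [hfin, h0, hneg]
  ring


lemma MLu_nonneg (hα0 : 0 < α) (hα1 : α < 1) {t : ℝ} (ht : 0 ≤ t) : 0 ≤ MLu α t := by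
  by_contra hneg
  push_neg at hneg
  have hGa : 0 < Real.Gamma α := Real.Gamma_pos_of_pos hα0
  have ht1 : (0:ℝ) ≤ t + 1 := by linarith
  have hcont := MLu_contOn hα0 hα1 ht1
  set A : Set ℝ := {s : ℝ | 0 ≤ s ∧ MLu α s < 0} with hAdef
  have htA : t ∈ A := ⟨ht, hneg⟩
  have hAne : A.Nonempty := ⟨t, htA⟩
  have hbdd : BddBelow A := ⟨0, fun s hs => hs.1⟩
  set τ := sInf A with hτdef
  have hτ0 : 0 ≤ τ := le_csInf hAne fun s hs => hs.1
  have hτle : ∀ s ∈ A, τ ≤ s := fun s hs => csInf_le hbdd hs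
  have hτt : τ ≤ t := hτle t htA
  have hpos : ∀ s, 0 ≤ s → s < τ → 0 ≤ MLu α s := by
    intro s h0 hs
    by_contra h
    push_neg at h
    exact absurd (hτle s ⟨h0, h⟩) (not_le.mpr hs)
  -- MLu α τ ≤ 0
  have hUτ_le : MLu α τ ≤ 0 := by
    by_contra h
    push_neg at h
    have hcw : ContinuousWithinAt (MLu α) (Icc 0 (t+1)) τ :=
      hcont τ ⟨hτ0, by linarith⟩
    have hev : (MLu α) ⁻¹' (Ioi 0) ∈ 𝓝[Icc 0 (t+1)] τ := hcw (Ioi_mem_nhds h)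
    rw [Metric.mem_nhdsWithin_iff] at hev
    obtain ⟨δ, hδ, hball⟩ := hev
    set δ' := min δ 1 with hδ'def
    have hδ' : 0 < δ' := lt_min hδ one_pos
    obtain ⟨s, hsA, hs⟩ := exists_lt_of_csInf_lt hAne (by linarith : sInf A < τ + δ')
    have hsτ : τ ≤ s := hτle s hsA
    have hsmem : s ∈ Metric.ball τ δ ∩ Icc 0 (t+1) := by
      constructor
      · rw [Metric.mem_ball, Real.dist_eq, abs_of_nonneg (by linarith)]
        have : δ' ≤ δ := min_le_left _ _
        linarith
      · exact ⟨hsA.1, by have : δ' ≤ 1 := min_le_right _ _; linarith⟩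
    exact absurd (hball hsmem) (not_lt.mpr hsA.2.le)
  -- τ > 0
  have hτpos : 0 < τ := by
    rcases eq_or_lt_of_le hτ0 with h | h
    · exfalso; rw [← h, MLu_zero hα0] at hUτ_le; linarith
    · exact h
  -- MLu α τ = 0
  have hUτ : MLu α τ = 0 := by
    rcases eq_or_lt_of_le hUτ_le with h | h
    · exact h
    · exfalso
      have hcτ : ContinuousOn (MLu α) (Icc 0 τ) :=
        hcont.mono (Icc_subset_Icc le_rfl (by linarith))
      have hmem : MLu α τ / 2 ∈ Icc (MLu α τ) (MLu α 0) := by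
        rw [MLu_zero hα0]; constructor <;> linarith
      obtain ⟨c, hc, hcv⟩ := intermediate_value_Icc' hτ0 hcτ hmem
      have hcA : c ∈ A := ⟨hc.1, by rw [hcv]; linarith⟩
      have : τ ≤ c := hτle c hcA
      have hcτ' : c = τ := le_antisymm hc.2 this
      rw [hcτ'] at hcv
      linarith
  -- u ≥ 0 on [0,τ]
  have hpos' : ∀ s ∈ Icc (0:ℝ) τ, 0 ≤ MLu α s := by
    intro s hs
    rcases eq_or_lt_of_le hs.2 with h | h
    · rw [h, hUτ]
    · exact hpos s hs.1 h
  -- ε with u ≥ 1/2 on [0, ε], 0 < ε < τ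
  have hhalf : ∃ ε : ℝ, 0 < ε ∧ ε < τ ∧ ∀ s ∈ Icc (0:ℝ) ε, (1:ℝ)/2 ≤ MLu α s := by
    have hcw : ContinuousWithinAt (MLu α) (Icc 0 (t+1)) 0 :=
      hcont 0 ⟨le_rfl, by linarith⟩
    have hev : (MLu α) ⁻¹' (Ioi (1/2)) ∈ 𝓝[Icc 0 (t+1)] 0 := by
      apply hcw
      apply Ioi_mem_nhds
      rw [MLu_zero hα0]; norm_num
    rw [Metric.mem_nhdsWithin_iff] at hev
    obtain ⟨δ, hδ, hball⟩ := hev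
    refine ⟨min (δ/2) (τ/2), by positivity, by
      have := min_le_right (δ/2) (τ/2); linarith, ?_⟩
    intro s hs
    have hsδ : s < δ := by
      have h1 := hs.2.trans (min_le_left (δ/2) (τ/2))
      linarith
    have hsτ : s ≤ τ := by
      have h1 := hs.2.trans (min_le_right (δ/2) (τ/2))
      linarith
    have : s ∈ Metric.ball (0:ℝ) δ ∩ Icc 0 (t+1) := by
      refine ⟨?_, hs.1, by linarith⟩
      rw [Metric.mem_ball, Real.dist_eq, sub_zero, abs_of_nonneg hs.1]
      exact hsδ
    exact le_of_lt (hball this)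
  obtain ⟨ε, hε0, hετ, hεhalf⟩ := hhalf
  -- choose the window width δ̄
  set c : ℝ := (Real.Gamma α * α / 4) ^ α⁻¹ with hcdef
  have hcpos : 0 < c := Real.rpow_pos_of_pos (by positivity) _
  set W : ℝ := min 1 c with hWdef
  have hW0 : 0 < W := lt_min one_pos hcpos
  have hWa : W ^ α ≤ Real.Gamma α * α / 4 := by
    calc W ^ α ≤ c ^ α := Real.rpow_le_rpow (le_of_lt hW0) (min_le_right _ _) hα0.le
      _ = Real.Gamma α * α / 4 := Real.rpow_inv_rpow (by positivity) (ne_of_gt hα0)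
  -- pick the bad point t₁ in (τ, τ + W)
  obtain ⟨t₁, ht₁A, ht₁lt⟩ := exists_lt_of_csInf_lt hAne (by linarith : sInf A < τ + W)
  have ht₁τ : τ ≤ t₁ := hτle t₁ ht₁A
  have ht₁ne : τ ≠ t₁ := by
    intro h; rw [← h] at ht₁A; exact absurd ht₁A.2 (not_lt.mpr hUτ.ge)
  have ht₁ : τ < t₁ := lt_of_le_of_ne ht₁τ ht₁ne
  have ht₁W : t₁ < τ + W := ht₁lt
  -- equation at τ
  have eqτ : ∫ s in (0:ℝ)..τ, (τ - s) ^ (α - 1) * MLu α s = Real.Gamma α := by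
    rw [inteq hα0 hα1 hτpos, hUτ]; ring
  -- kernel primitive
  have hK : ∀ r : ℝ, τ ≤ r → ∫ s in τ..r, (r - s) ^ (α - 1) = (r - τ) ^ α / α := by
    intro r hr
    rw [intervalIntegral.integral_comp_sub_left (fun x => x ^ (α - 1)) r]
    rw [sub_self, integral_rpow (Or.inl (by linarith : (-1:ℝ) < α - 1))]
    rw [show α - 1 + 1 = α from by ring, Real.zero_rpow (ne_of_gt hα0), sub_zero]
  -- P
  set P : ℝ → ℝ := fun r =>
    Real.Gamma α - ∫ s in (0:ℝ)..τ, (r - s) ^ (α - 1) * MLu α s with hPdef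
  -- pointwise kernel comparison on [0,τ]
  have hptw : ∀ r r' : ℝ, τ ≤ r → r ≤ r' → ∀ s ∈ Icc (0:ℝ) τ,
      (r' - s) ^ (α - 1) * MLu α s ≤ (r - s) ^ (α - 1) * MLu α s := by
    intro r r' hr hrr' s hs
    rcases eq_or_lt_of_le hs.2 with h | h
    · rw [h, hUτ, mul_zero, mul_zero]
    · have hb : 0 < r - s := by linarith
      have hcmp : (r' - s) ^ (α - 1) ≤ (r - s) ^ (α - 1) :=
        Real.rpow_le_rpow_of_nonpos hb (by linarith) (by linarith)
      exact mul_le_mul_of_nonneg_right hcmp (hpos s hs.1 h)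
  -- P is monotone on [τ, ∞), nonneg
  have hPmono : ∀ r r' : ℝ, τ ≤ r → r ≤ r' → P r ≤ P r' := by
    intro r r' hr hrr'
    have := intervalIntegral.integral_mono_on hτ0
      (uker_int hα0 hα1 (t := r') le_rfl hτ0)
      (uker_int hα0 hα1 (t := r) le_rfl hτ0) (hptw r r' hr hrr')
    simp only [hPdef]
    linarith
  have hPzero : P τ = 0 := by simp only [hPdef, eqτ]; ring
  have hPnonneg : ∀ r : ℝ, τ ≤ r → 0 ≤ P r := by
    intro r hr
    rw [← hPzero]
    exact hPmono τ r le_rfl hr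
  -- split identity: for τ < r
  have hsplit : ∀ r : ℝ, τ < r →
      Real.Gamma α * MLu α r = P r - ∫ s in τ..r, (r - s) ^ (α - 1) * MLu α s := by
    intro r hr
    have h1 := inteq hα0 hα1 (lt_trans hτpos hr)
    have h2 : (∫ s in (0:ℝ)..τ, (r - s) ^ (α - 1) * MLu α s)
        + ∫ s in τ..r, (r - s) ^ (α - 1) * MLu α s
        = ∫ s in (0:ℝ)..r, (r - s) ^ (α - 1) * MLu α s :=
      intervalIntegral.integral_add_adjacent_intervals
        (uker_int hα0 hα1 le_rfl hτ0) (uker_int hα0 hα1 hτ0 hr.le)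
    simp only [hPdef]
    linarith
  -- max of |u| on [τ, t₁]
  have hW1 : W ≤ 1 := min_le_left _ _
  have hsub1 : Icc τ t₁ ⊆ Icc 0 (t + 1) := Icc_subset_Icc hτ0 (by linarith)
  obtain ⟨rm, hrmmem, hrmmax⟩ := (isCompact_Icc (a := τ) (b := t₁)).exists_isMaxOn
    (nonempty_Icc.mpr ht₁τ) ((hcont.mono hsub1).abs)
  set M : ℝ := |MLu α rm| with hMdef
  have hM0 : 0 ≤ M := abs_nonneg _
  have hMb : ∀ s ∈ Icc τ t₁, |MLu α s| ≤ M := fun s hs => hrmmax hs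
  -- tail bound
  have hq : W ^ α / α ≤ Real.Gamma α / 4 := by
    rw [div_le_div_iff₀ hα0 (by norm_num)]
    nlinarith
  have hWαpos : 0 < W ^ α / α := by positivity
  have hI : ∀ r : ℝ, τ < r → r ≤ t₁ →
      |∫ s in τ..r, (r - s) ^ (α - 1) * MLu α s| ≤ M * (W ^ α / α) := by
    intro r hr hrt₁
    have habs := intervalIntegral.abs_integral_le_integral_abs
      (f := fun s => (r - s) ^ (α - 1) * MLu α s) (μ := volume) hr.le
    have hmono : (∫ s in τ..r, |(r - s) ^ (α - 1) * MLu α s|)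
        ≤ ∫ s in τ..r, (r - s) ^ (α - 1) * M := by
      apply intervalIntegral.integral_mono_on hr.le
        ((uker_int hα0 hα1 hτ0 hr.le).abs)
        ((ker_int hα0 hα1 r τ r).mul_const M)
      intro s hs
      have hker : (0:ℝ) ≤ (r - s) ^ (α - 1) := Real.rpow_nonneg (by linarith [hs.2]) _
      rw [abs_mul, abs_of_nonneg hker]
      apply mul_le_mul_of_nonneg_left _ hker
      exact hMb s ⟨hs.1, le_trans hs.2 hrt₁⟩
    have hval : (∫ s in τ..r, (r - s) ^ (α - 1) * M) = (r - τ) ^ α / α * M := by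
      rw [intervalIntegral.integral_mul_const, hK r hr.le]
    have hle : (r - τ) ^ α / α * M ≤ W ^ α / α * M := by
      apply mul_le_mul_of_nonneg_right _ hM0
      apply (div_le_div_iff_of_pos_right hα0).mpr
      exact Real.rpow_le_rpow (by linarith) (by linarith) hα0.le
    calc |∫ s in τ..r, (r - s) ^ (α - 1) * MLu α s|
        ≤ ∫ s in τ..r, |(r - s) ^ (α - 1) * MLu α s| := habs
      _ ≤ ∫ s in τ..r, (r - s) ^ (α - 1) * M := hmono
      _ = (r - τ) ^ α / α * M := hval
      _ ≤ W ^ α / α * M := hle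
      _ = M * (W ^ α / α) := by ring
  -- sup bound
  have hMB : M * Real.Gamma α ≤ P t₁ + M * (Real.Gamma α / 4) := by
    rcases eq_or_lt_of_le hrmmem.1 with h | h
    · -- rm = τ : M = 0
      have : M = 0 := by rw [hMdef, ← h, hUτ, abs_zero]
      rw [this]
      simpa using hPnonneg t₁ ht₁τ
    · have h1 := hsplit rm h
      have h2 := hI rm h hrmmem.2
      have h3 : P rm ≤ P t₁ := hPmono rm t₁ hrmmem.1 hrmmem.2
      have h4 : 0 ≤ P rm := hPnonneg rm hrmmem.1
      have h5 : Real.Gamma α * M = |Real.Gamma α * MLu α rm| := by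
        rw [abs_mul, abs_of_nonneg hGa.le, hMdef]
      have h6 : |Real.Gamma α * MLu α rm| ≤ P t₁ + M * (W ^ α / α) := by
        rw [h1]
        calc |P rm - ∫ s in τ..rm, (rm - s) ^ (α - 1) * MLu α s|
            ≤ |P rm| + |∫ s in τ..rm, (rm - s) ^ (α - 1) * MLu α s| := abs_sub _ _
          _ ≤ P t₁ + M * (W ^ α / α) := by
              rw [abs_of_nonneg h4]
              exact add_le_add h3 h2
      have h7 : M * (W ^ α / α) ≤ M * (Real.Gamma α / 4) :=
        mul_le_mul_of_nonneg_left hq hM0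
      nlinarith [h5, h6]
  have hMle : 3 / 4 * (M * Real.Gamma α) ≤ P t₁ := by linarith
  -- positivity of P t₁
  have hPpos : 0 < P t₁ := by
    have hJint1 : IntervalIntegrable (fun s => (τ - s) ^ (α - 1) - (t₁ - s) ^ (α - 1))
        volume 0 ε := (ker_int hα0 hα1 τ 0 ε).sub (ker_int hα0 hα1 t₁ 0 ε)
    have hJpos : 0 < ∫ s in (0:ℝ)..ε, ((τ - s) ^ (α - 1) - (t₁ - s) ^ (α - 1)) := by
      apply intervalIntegral_pos_of_pos_on hJint1 _ hε0
      intro s hs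
      rw [sub_pos]
      exact Real.rpow_lt_rpow_of_neg (by linarith [hs.2]) (by linarith) (by linarith)
    have hQ : P t₁ = ∫ s in (0:ℝ)..τ,
        ((τ - s) ^ (α - 1) * MLu α s - (t₁ - s) ^ (α - 1) * MLu α s) := by
      rw [intervalIntegral.integral_sub (uker_int hα0 hα1 le_rfl hτ0)
        (uker_int hα0 hα1 le_rfl hτ0), eqτ]
    have hQsplit : (∫ s in (0:ℝ)..ε,
          ((τ - s) ^ (α - 1) * MLu α s - (t₁ - s) ^ (α - 1) * MLu α s))
        + ∫ s in ε..τ, ((τ - s) ^ (α - 1) * MLu α s - (t₁ - s) ^ (α - 1) * MLu α s)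
        = ∫ s in (0:ℝ)..τ,
          ((τ - s) ^ (α - 1) * MLu α s - (t₁ - s) ^ (α - 1) * MLu α s) :=
      intervalIntegral.integral_add_adjacent_intervals
        ((uker_int hα0 hα1 le_rfl hε0.le).sub (uker_int hα0 hα1 le_rfl hε0.le))
        ((uker_int hα0 hα1 hε0.le hετ.le).sub (uker_int hα0 hα1 hε0.le hετ.le))
    have hQ2 : 0 ≤ ∫ s in ε..τ,
        ((τ - s) ^ (α - 1) * MLu α s - (t₁ - s) ^ (α - 1) * MLu α s) := by
      apply intervalIntegral.integral_nonneg hετ.le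
      intro s hs
      rw [sub_nonneg]
      exact hptw τ t₁ le_rfl ht₁.le s ⟨by linarith [hs.1], hs.2⟩
    have hQ1 : (∫ s in (0:ℝ)..ε, ((τ - s) ^ (α - 1) - (t₁ - s) ^ (α - 1)))
          * (1 / 2)
        ≤ ∫ s in (0:ℝ)..ε,
          ((τ - s) ^ (α - 1) * MLu α s - (t₁ - s) ^ (α - 1) * MLu α s) := by
      rw [← intervalIntegral.integral_mul_const]
      apply intervalIntegral.integral_mono_on hε0.le (hJint1.mul_const _)
        ((uker_int hα0 hα1 le_rfl hε0.le).sub (uker_int hα0 hα1 le_rfl hε0.le))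
      intro s hs
      have hd : (0:ℝ) ≤ (τ - s) ^ (α - 1) - (t₁ - s) ^ (α - 1) := by
        rw [sub_nonneg]
        exact Real.rpow_le_rpow_of_nonpos (by linarith [hs.2]) (by linarith) (by linarith)
      have hus := hεhalf s hs
      calc ((τ - s) ^ (α - 1) - (t₁ - s) ^ (α - 1)) * (1 / 2)
          ≤ ((τ - s) ^ (α - 1) - (t₁ - s) ^ (α - 1)) * MLu α s :=
            mul_le_mul_of_nonneg_left hus hd
        _ = (τ - s) ^ (α - 1) * MLu α s - (t₁ - s) ^ (α - 1) * MLu α s := by ring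
    rw [hQ, ← hQsplit]
    linarith [hQ1, hQ2, hJpos]
  -- final contradiction
  have hfin := hsplit t₁ ht₁
  have hIt₁ := hI t₁ ht₁ le_rfl
  have h7 : M * (W ^ α / α) ≤ M * (Real.Gamma α / 4) := mul_le_mul_of_nonneg_left hq hM0
  have h8 : (∫ s in τ..t₁, (t₁ - s) ^ (α - 1) * MLu α s) ≤ M * (Real.Gamma α / 4) :=
    le_trans (le_trans (le_abs_self _) hIt₁) h7
  have h9 : Real.Gamma α * MLu α t₁ < 0 := mul_neg_of_pos_of_neg hGa ht₁A.2
  set I : ℝ := ∫ (s : ℝ) in τ..t₁, (t₁ - s) ^ (α - 1) * MLu α s with hIdef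
  clear_value I P M
  have e1 : I ≤ M * (Real.Gamma α / 4) := h8
  have e2 : Real.Gamma α * MLu α t₁ = P t₁ - I := hfin
  have e3 : P t₁ < I := by linarith only [e2, h9]
  have e4 : M * Real.Gamma α < 4 * P t₁ := by linarith only [hMle, hPpos]
  linarith only [e1, e3, e4, hPpos]


lemma MLu_le_one (hα0 : 0 < α) (hα1 : α < 1) {t : ℝ} (ht : 0 ≤ t) : MLu α t ≤ 1 := by
  rcases eq_or_lt_of_le ht with h | h
  · rw [← h, MLu_zero hα0]
  · have h1 := inteq hα0 hα1 h
    have h2 : 0 ≤ ∫ s in (0:ℝ)..t, (t - s) ^ (α - 1) * MLu α s := by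
      apply intervalIntegral.integral_nonneg h.le
      intro s hs
      exact mul_nonneg (Real.rpow_nonneg (by linarith [hs.2]) _) (MLu_nonneg hα0 hα1 hs.1)
    have hGa : 0 < Real.Gamma α := Real.Gamma_pos_of_pos hα0
    by_contra hc
    push_neg at hc
    have h3 : Real.Gamma α * (1 - MLu α t) < 0 :=
      mul_neg_of_pos_of_neg hGa (by linarith)
    linarith


lemma ML_eq (hα0 : 0 < α) (hα1 : α < 1) {z : ℝ} (hz : 0 ≤ z) :
    mittagLeffler α 1 (-z) = MLu α (z ^ α⁻¹) := by
  rw [mittagLeffler, MLu]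
  apply tsum_congr
  intro k
  have h1 : ((z ^ α⁻¹) ^ (α * (k:ℝ))) = z ^ (k:ℝ) := by
    rw [← Real.rpow_mul hz]
    congr 1
    field_simp
  rw [h1, Real.rpow_natCast, neg_pow]


end aux

theorem mittagLeffler_sub_kappa_inv_bounded (α κ : ℝ) (hα0 : 0 < α) (hα1 : α < 1)
    (hκ : κ < 0 ∨ 1 < κ) :
    ∃ C > (0:ℝ), ∀ z : ℝ, 0 ≤ z → |mittagLeffler α 1 (-z) - κ|⁻¹ ≤ C := by
  have key : ∀ z : ℝ, 0 ≤ z → 0 ≤ mittagLeffler α 1 (-z) ∧ mittagLeffler α 1 (-z) ≤ 1 := by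
    intro z hz
    rw [ML_eq hα0 hα1 hz]
    exact ⟨MLu_nonneg hα0 hα1 (Real.rpow_nonneg hz _),
      MLu_le_one hα0 hα1 (Real.rpow_nonneg hz _)⟩
  rcases hκ with hκ | hκ
  · refine ⟨(-κ)⁻¹, inv_pos.mpr (by linarith), fun z hz => ?_⟩
    have h := key z hz
    have h1 : -κ ≤ |mittagLeffler α 1 (-z) - κ| := by
      rw [abs_of_nonneg (by linarith [h.1])]; linarith [h.1]
    exact inv_anti₀ (by linarith) h1
  · refine ⟨(κ - 1)⁻¹, inv_pos.mpr (by linarith), fun z hz => ?_⟩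
    have h := key z hz
    have h1 : κ - 1 ≤ |mittagLeffler α 1 (-z) - κ| := by
      rw [abs_of_nonpos (by linarith [h.2])]; linarith [h.2]
    exact inv_anti₀ (by linarith) h1
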